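/- Let p ≥ 2. For every f ∈ L^p(X,μ), sup{Ω(f,f) : Ω ∈ S(L^p(X,μ))} = ‖f‖_p². (Equivalently, the norm ‖f‖_α defined by ‖f‖_α² = sup{Ω(f,f) : Ω ∈ S(L^p(X,μ))} coincides with ‖f‖_p.) -/

import Mathlib

open MeasureTheory ENNReal Complex
open scoped ComplexOrder


lemma holder3_aux {α : Type*} [MeasurableSpace α] {μ : Measure α} {P : ℝ} (hP : 2 ≤ P)
    {u v w : α → ℝ≥0∞} (hu : AEMeasurable u μ) (hv : AEMeasurable v μ) (hw : AEMeasurable w μ) :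
    ∫⁻ a, (u a) ^ (1/P) * (v a) ^ (1/P) * (w a) ^ ((P-2)/P) ∂μ ≤
      (∫⁻ a, u a ∂μ) ^ (1/P) * (∫⁻ a, v a ∂μ) ^ (1/P) * (∫⁻ a, w a ∂μ) ^ ((P-2)/P) := by
  have hP0 : (0:ℝ) < P := by linarith
  have h := ENNReal.lintegral_prod_norm_pow_le (μ := μ) (Finset.univ : Finset (Fin 3))
    (f := ![u, v, w]) (p := ![1/P, 1/P, (P-2)/P])
    (by rintro ⟨i, hi⟩ _
        interval_cases i <;> simpa using ‹_›)
    (by simp [Fin.sum_univ_three]; field_simp; ring)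
    (by rintro ⟨i, hi⟩ _
        interval_cases i <;> simp <;> [positivity; positivity;
          exact div_nonneg (by linarith) hP0.le])
  simpa [Fin.prod_univ_three] using h



/-- The set `S(L^p)` of sesquilinear forms on `L^p(X,μ)`: `Ω` is linear in the
first variable, conjugate-linear in the second, positive (`Ω(f,f) ≥ 0`),
invariant (`Ω(f·φ, ψ) = Ω(φ, f̄·ψ)` for continuous `φ, ψ`), and bounded
(`|Ω(f,g)| ≤ ‖f‖_p ‖g‖_p`). -/
def IsSform {X : Type*} [MeasurableSpace X] [TopologicalSpace X]
    (μ : Measure X) (p : ℝ≥0∞)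
    (Ω : Lp ℂ p μ → Lp ℂ p μ → ℂ) : Prop :=
  (∀ f g h : Lp ℂ p μ, Ω (f + g) h = Ω f h + Ω g h) ∧
  (∀ (c : ℂ) (f g : Lp ℂ p μ), Ω (c • f) g = c * Ω f g) ∧
  (∀ f g h : Lp ℂ p μ, Ω f (g + h) = Ω f g + Ω f h) ∧
  (∀ (c : ℂ) (f g : Lp ℂ p μ), Ω f (c • g) = (starRingEnd ℂ) c * Ω f g) ∧
  (∀ f : Lp ℂ p μ, 0 ≤ Ω f f) ∧
  (∀ (f : Lp ℂ p μ) (φ ψ : C(X, ℂ)) (φL ψL fφ fstarψ : Lp ℂ p μ),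
      (φL : X → ℂ) =ᵐ[μ] φ → (ψL : X → ℂ) =ᵐ[μ] ψ →
      (fφ : X → ℂ) =ᵐ[μ] (fun x => f x * φ x) →
      (fstarψ : X → ℂ) =ᵐ[μ] (fun x => (starRingEnd ℂ) (f x) * ψ x) →
      Ω fφ ψL = Ω φL fstarψ) ∧
  (∀ f g : Lp ℂ p μ, ‖Ω f g‖ ≤ ‖f‖ * ‖g‖)

/-- The set `B^p_+`: nonnegative functions in `L^{p/(p-2)}` of norm at most one
(in `ℝ≥0∞`-arithmetic `p/(p-2) = ∞` when `p = 2`). -/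
def MemBp {X : Type*} [MeasurableSpace X] (μ : Measure X) (p : ℝ≥0∞)
    (ψ : X → ℝ) : Prop :=
  MemLp ψ (p / (p - 2)) μ ∧ (0 ≤ᵐ[μ] ψ) ∧ eLpNorm ψ (p / (p - 2)) μ ≤ 1


/-- For `p ≥ 2` and `f ∈ L^p(X,μ)`,
`sup {Ω(f,f) : Ω ∈ S(L^p(X,μ))} = ‖f‖_p²`, i.e. `‖f‖_α = ‖f‖_p`. -/
theorem alpha_norm_eq_lp_norm
    {X : Type*} [MeasurableSpace X] [TopologicalSpace X] [CompactSpace X]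
    [T2Space X] [BorelSpace X] (μ : Measure X) [IsFiniteMeasure μ]
    (p : ℝ≥0∞) (hp : 2 ≤ p) (hp' : p ≠ ∞) (f : Lp ℂ p μ) :
    sSup {r : ℝ | ∃ Ω : Lp ℂ p μ → Lp ℂ p μ → ℂ,
        IsSform μ p Ω ∧ Ω f f = (r : ℂ)} = ‖f‖ ^ 2 := by
  haveI : Fact (1 ≤ p) := ⟨le_trans (by norm_num) hp⟩
  
  have hub : ∀ r ∈ {r : ℝ | ∃ Ω : Lp ℂ p μ → Lp ℂ p μ → ℂ,
      IsSform μ p Ω ∧ Ω f f = (r : ℂ)}, r ≤ ‖f‖ ^ 2 := by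
    rintro r ⟨Ω, hΩ, hr⟩
    have h1 := hΩ.2.2.2.2.2.2 f f
    rw [hr, Complex.norm_real, Real.norm_eq_abs] at h1
    calc r ≤ |r| := le_abs_self r
      _ ≤ ‖f‖ * ‖f‖ := h1
      _ = ‖f‖ ^ 2 := (sq ‖f‖).symm
  have hmem : ‖f‖ ^ 2 ∈ {r : ℝ | ∃ Ω : Lp ℂ p μ → Lp ℂ p μ → ℂ,
      IsSform μ p Ω ∧ Ω f f = (r : ℂ)} := by
    by_cases hf0 : f = 0
    · refine ⟨fun _ _ => 0, ⟨fun _ _ _ => by ring, fun _ _ _ => by ring, fun _ _ _ => by ring,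
        fun _ _ _ => by ring, fun _ => le_refl 0, fun _ _ _ _ _ _ _ _ _ _ _ => rfl,
        fun g h => by simpa using mul_nonneg (norm_nonneg g) (norm_nonneg h)⟩, ?_⟩
      simp [hf0]
    · set P := p.toReal with hPdef
      have hP2 : (2:ℝ) ≤ P := by
        have := ENNReal.toReal_mono hp' hp
        simpa using this
      have hP0 : (0:ℝ) < P := by linarith
      have hp0 : p ≠ 0 := by intro h; rw [h] at hp; simp at hp
      haveI : Fact (1 ≤ p) := ⟨le_trans (by norm_num) hp⟩
      -- measurability of the weight
      have hfm : AEMeasurable (fun x => (‖f x‖₊ : ℝ≥0∞)) μ := (Lp.aestronglyMeasurable f).enorm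
      set W : X → ℂ := fun x => ((‖f x‖ ^ (P-2) : ℝ) : ℂ) with hWdef
      have hWm : AEStronglyMeasurable W μ := by
        have h1 : AEMeasurable (fun x => ‖f x‖) μ := (Lp.aestronglyMeasurable f).norm.aemeasurable
        have h2 : AEMeasurable (fun x => ‖f x‖ ^ (P-2)) μ :=
          ((Real.continuous_rpow_const (by linarith : (0:ℝ) ≤ P-2)).measurable).comp_aemeasurable h1
        exact (Complex.measurable_ofReal.comp_aemeasurable h2).aestronglyMeasurable
      have hWnn : ∀ x, (‖W x‖₊ : ℝ≥0∞) = (‖f x‖₊ : ℝ≥0∞) ^ (P - 2) := by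
        intro x
        have hnx : ‖W x‖ = ‖f x‖ ^ (P-2) := by
          rw [hWdef]
          simp only [Complex.norm_real, Real.norm_eq_abs]
          exact abs_of_nonneg (Real.rpow_nonneg (norm_nonneg _) _)
        rw [← enorm_eq_nnnorm, ← enorm_eq_nnnorm, ← ofReal_norm, ← ofReal_norm, hnx,
          ENNReal.ofReal_rpow_of_nonneg (norm_nonneg _) (by linarith)]
      -- the key Hölder estimate
      have key : ∀ g h : Lp ℂ p μ,
          ∫⁻ x, (‖g x‖₊ : ℝ≥0∞) * (‖h x‖₊ : ℝ≥0∞) * (‖f x‖₊ : ℝ≥0∞) ^ (P-2) ∂μ ≤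
            eLpNorm g p μ * eLpNorm h p μ * (eLpNorm f p μ) ^ (P-2) := by
        intro g h
        have hgm := (Lp.aestronglyMeasurable g).enorm
        have hhm := (Lp.aestronglyMeasurable h).enorm
        have e1 : ∀ (z : ℝ≥0∞), (z ^ P) ^ (1/P) = z := by
          intro z
          rw [← ENNReal.rpow_mul, mul_one_div_cancel hP0.ne', ENNReal.rpow_one]
        have e2 : ∀ (z : ℝ≥0∞), (z ^ P) ^ ((P-2)/P) = z ^ (P-2) := by
          intro z
          rw [← ENNReal.rpow_mul]
          congr 1
          field_simp
        calc ∫⁻ x, (‖g x‖₊ : ℝ≥0∞) * (‖h x‖₊ : ℝ≥0∞) * (‖f x‖₊ : ℝ≥0∞) ^ (P-2) ∂μ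
            = ∫⁻ x, ((‖g x‖₊ : ℝ≥0∞) ^ P) ^ (1/P) * ((‖h x‖₊ : ℝ≥0∞) ^ P) ^ (1/P) *
                ((‖f x‖₊ : ℝ≥0∞) ^ P) ^ ((P-2)/P) ∂μ := by
              refine lintegral_congr fun x => ?_
              rw [e1, e1, e2]
          _ ≤ (∫⁻ x, (‖g x‖₊ : ℝ≥0∞) ^ P ∂μ) ^ (1/P) * (∫⁻ x, (‖h x‖₊ : ℝ≥0∞) ^ P ∂μ) ^ (1/P) *
                (∫⁻ x, (‖f x‖₊ : ℝ≥0∞) ^ P ∂μ) ^ ((P-2)/P) :=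
              holder3_aux hP2 (hgm.pow_const P) (hhm.pow_const P) (hfm.pow_const P)
          _ = eLpNorm g p μ * eLpNorm h p μ * (eLpNorm f p μ) ^ (P-2) := by
              rw [eLpNorm_eq_lintegral_rpow_enorm_toReal hp0 hp', eLpNorm_eq_lintegral_rpow_enorm_toReal hp0 hp',
                eLpNorm_eq_lintegral_rpow_enorm_toReal hp0 hp', ← ENNReal.rpow_mul]
              congr 1
              field_simp
              rfl
      have hIntNorm : ∀ g h : Lp ℂ p μ,
          ∫⁻ x, ‖g x * (starRingEnd ℂ) (h x) * W x‖₊ ∂μ ≤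
            eLpNorm g p μ * eLpNorm h p μ * (eLpNorm f p μ) ^ (P-2) := by
        intro g h
        refine le_trans (le_of_eq (lintegral_congr fun x => ?_)) (key g h)
        rw [nnnorm_mul, nnnorm_mul, ENNReal.coe_mul, ENNReal.coe_mul, hWnn x, RCLike.nnnorm_conj]
      have hRHSlt : eLpNorm f p μ ^ (P-2) ≠ ∞ :=
        (ENNReal.rpow_lt_top_of_nonneg (by linarith) (Lp.eLpNorm_ne_top f)).ne
      have hRHSlt' : ∀ g h : Lp ℂ p μ,
          eLpNorm g p μ * eLpNorm h p μ * (eLpNorm f p μ) ^ (P-2) < ∞ :=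
        fun g h => ENNReal.mul_lt_top
          (ENNReal.mul_lt_top (Lp.eLpNorm_lt_top g) (Lp.eLpNorm_lt_top h))
          hRHSlt.lt_top
      have hInt : ∀ g h : Lp ℂ p μ,
          Integrable (fun x => g x * (starRingEnd ℂ) (h x) * W x) μ := by
        intro g h
        refine ⟨((Lp.aestronglyMeasurable g).mul
          ((Complex.continuous_conj).comp_aestronglyMeasurable (Lp.aestronglyMeasurable h))).mul hWm,
          ?_⟩
        exact lt_of_le_of_lt (hIntNorm g h) (hRHSlt' g h)
      have hfpos : (0:ℝ) < ‖f‖ := norm_pos_iff.mpr hf0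
      set k : ℝ := ‖f‖ ^ (P - 2) with hk
      have hkpos : 0 < k := Real.rpow_pos_of_pos hfpos _
      set Ω : Lp ℂ p μ → Lp ℂ p μ → ℂ :=
        fun g h => ((k⁻¹ : ℝ) : ℂ) * ∫ x, g x * (starRingEnd ℂ) (h x) * W x ∂μ with hΩdef
      refine ⟨Ω, ⟨?_, ?_, ?_, ?_, ?_, ?_, ?_⟩, ?_⟩
      · intro g g' h
        simp only [hΩdef]
        have e : (fun x => ((g + g') x) * (starRingEnd ℂ) (h x) * W x) =ᵐ[μ]
            fun x => g x * (starRingEnd ℂ) (h x) * W x + g' x * (starRingEnd ℂ) (h x) * W x := by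
          filter_upwards [Lp.coeFn_add g g'] with x hx
          rw [hx, Pi.add_apply]; ring
        rw [integral_congr_ae e, integral_add (hInt g h) (hInt g' h)]
        ring
      · intro c g h
        simp only [hΩdef]
        have e : (fun x => ((c • g) x) * (starRingEnd ℂ) (h x) * W x) =ᵐ[μ]
            fun x => c * (g x * (starRingEnd ℂ) (h x) * W x) := by
          filter_upwards [Lp.coeFn_smul c g] with x hx
          rw [hx, Pi.smul_apply, smul_eq_mul]; ring
        rw [integral_congr_ae e, integral_const_mul]
        ring
      · intro g h h'
        simp only [hΩdef]
        have e : (fun x => g x * (starRingEnd ℂ) ((h + h') x) * W x) =ᵐ[μ]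
            fun x => g x * (starRingEnd ℂ) (h x) * W x + g x * (starRingEnd ℂ) (h' x) * W x := by
          filter_upwards [Lp.coeFn_add h h'] with x hx
          rw [hx, Pi.add_apply, map_add]; ring
        rw [integral_congr_ae e, integral_add (hInt g h) (hInt g h')]
        ring
      · intro c g h
        simp only [hΩdef]
        have e : (fun x => g x * (starRingEnd ℂ) ((c • h) x) * W x) =ᵐ[μ]
            fun x => (starRingEnd ℂ) c * (g x * (starRingEnd ℂ) (h x) * W x) := by
          filter_upwards [Lp.coeFn_smul c h] with x hx
          rw [hx, Pi.smul_apply, smul_eq_mul, map_mul]; ring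
        rw [integral_congr_ae e, integral_const_mul]
        ring
      · intro g
        simp only [hΩdef]
        have e : (fun x => g x * (starRingEnd ℂ) (g x) * W x) =ᵐ[μ]
            fun x => ((Complex.normSq (g x) * ‖f x‖ ^ (P-2) : ℝ) : ℂ) := by
          refine Filter.Eventually.of_forall fun x => ?_
          simp only []
          rw [Complex.mul_conj, hWdef]
          push_cast
          ring
        rw [integral_congr_ae e, integral_complex_ofReal, ← Complex.ofReal_mul, Complex.zero_le_real]
        exact mul_nonneg (inv_nonneg.mpr hkpos.le) (integral_nonneg fun x =>
          mul_nonneg (Complex.normSq_nonneg _) (Real.rpow_nonneg (norm_nonneg _) _))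
      · intro f' φ ψ φL ψL fφ fψ h1 h2 h3 h4
        simp only [hΩdef]
        congr 1
        refine integral_congr_ae ?_
        filter_upwards [h1, h2, h3, h4] with x e1 e2 e3 e4
        rw [e3, e2, e1, e4]
        simp only [map_mul, Complex.conj_conj]
        ring
      · intro g h
        simp only [hΩdef]
        have habs : ‖((k⁻¹ : ℝ) : ℂ) * ∫ x, g x * (starRingEnd ℂ) (h x) * W x ∂μ‖
            = k⁻¹ * ‖∫ x, g x * (starRingEnd ℂ) (h x) * W x ∂μ‖ := by
          rw [norm_mul, Complex.norm_real, Real.norm_eq_abs, _root_.abs_of_nonneg (inv_nonneg.mpr hkpos.le)]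
        have h2 : ‖∫ x, g x * (starRingEnd ℂ) (h x) * W x ∂μ‖ ≤
            (eLpNorm g p μ * eLpNorm h p μ * (eLpNorm f p μ) ^ (P-2)).toReal := by
          calc ‖∫ x, g x * (starRingEnd ℂ) (h x) * W x ∂μ‖
              = ‖∫ x, g x * (starRingEnd ℂ) (h x) * W x ∂μ‖ := rfl
            _ ≤ (∫⁻ x, ENNReal.ofReal ‖g x * (starRingEnd ℂ) (h x) * W x‖ ∂μ).toReal :=
                norm_integral_le_lintegral_norm _
            _ = (∫⁻ x, (‖g x * (starRingEnd ℂ) (h x) * W x‖₊ : ℝ≥0∞) ∂μ).toReal := by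
                simp_rw [ofReal_norm, enorm_eq_nnnorm]
            _ ≤ _ := ENNReal.toReal_mono (hRHSlt' g h).ne (hIntNorm g h)
        have h3 : (eLpNorm g p μ * eLpNorm h p μ * (eLpNorm f p μ) ^ (P-2)).toReal
            = ‖g‖ * ‖h‖ * k := by
          rw [ENNReal.toReal_mul, ENNReal.toReal_mul, ← ENNReal.toReal_rpow,
            ← Lp.norm_def, ← Lp.norm_def, ← Lp.norm_def, hk]
        rw [habs]
        calc k⁻¹ * ‖∫ x, g x * (starRingEnd ℂ) (h x) * W x ∂μ‖
            ≤ k⁻¹ * (‖g‖ * ‖h‖ * k) :=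
              mul_le_mul_of_nonneg_left (h3 ▸ h2) (inv_nonneg.mpr hkpos.le)
          _ = ‖g‖ * ‖h‖ := by field_simp
      · simp only [hΩdef]
        have e : (fun x => f x * (starRingEnd ℂ) (f x) * W x) =ᵐ[μ]
            fun x => ((‖f x‖ ^ P : ℝ) : ℂ) := by
          refine Filter.Eventually.of_forall fun x => ?_
          simp only []
          rw [Complex.mul_conj, hWdef]
          have : (Complex.normSq (f x) : ℝ) * ‖f x‖ ^ (P-2) = ‖f x‖ ^ P := by
            rw [Complex.normSq_eq_norm_sq, ← Real.rpow_natCast ‖f x‖ 2,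
              ← Real.rpow_add' (norm_nonneg _) (by push_cast; linarith)]
            norm_num
          push_cast
          rw [← this]
          push_cast
          ring
        rw [integral_congr_ae e, integral_complex_ofReal, ← Complex.ofReal_mul]
        congr 1
        have h2 : ∫ x, ‖f x‖ ^ P ∂μ = (∫⁻ x, (‖f x‖₊ : ℝ≥0∞) ^ P ∂μ).toReal := by
          rw [integral_eq_lintegral_of_nonneg_ae
            (Filter.Eventually.of_forall fun x => Real.rpow_nonneg (norm_nonneg _) _)
            (((Real.continuous_rpow_const (by linarith : (0:ℝ) ≤ P)).measurable).comp_aemeasurable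
              (Lp.aestronglyMeasurable f).norm.aemeasurable).aestronglyMeasurable]
          congr 1
          refine lintegral_congr fun x => ?_
          rw [← ENNReal.ofReal_rpow_of_nonneg (norm_nonneg (f x)) hP0.le,
            ofReal_norm, enorm_eq_nnnorm]
        have h3 : ‖f‖ ^ P = (∫⁻ x, (‖f x‖₊ : ℝ≥0∞) ^ P ∂μ).toReal := by
          rw [Lp.norm_def, eLpNorm_eq_lintegral_rpow_enorm_toReal hp0 hp', ENNReal.toReal_rpow,
            ← ENNReal.rpow_mul, one_div_mul_cancel hP0.ne', ENNReal.rpow_one]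
          rfl
        rw [h2, ← h3]
        have h4 : k⁻¹ * ‖f‖ ^ P = ‖f‖ ^ (2:ℝ) := by
          rw [hk, ← Real.rpow_neg hfpos.le, ← Real.rpow_add hfpos]
          norm_num
        rw [h4, show (2:ℝ) = ((2:ℕ):ℝ) by norm_num, Real.rpow_natCast]
  exact le_antisymm (csSup_le ⟨_, hmem⟩ hub) (le_csSup ⟨_, hub⟩ hmem)
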